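/- arXiv:1412.2196 — 2 statements merged into one kernel-verified Lean document; each statement's English description precedes it below -/
import Mathlib

section
/- The optimal value of min_{Z,E} rank(Z) + λf(E) subject to X − E = (X − E)Z equals min_E [rank(X − E) + λf(E)]; i.e., the original R-LRR is equivalent to the original R-PCA after eliminating Z. -/
open Matrix

def IsMoorePenrose {m n : ℕ} (A : Matrix (Fin m) (Fin n) ℝ) (B : Matrix (Fin n) (Fin m) ℝ) : Prop :=
  A * B * A = A ∧ B * A * B = B ∧ (A * B)ᵀ = A * B ∧ (B * A)ᵀ = B * A

noncomputable def nuclearNorm {p q : ℕ} (M : Matrix (Fin p) (Fin q) ℝ) : ℝ :=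
  ∑ i, Real.sqrt ((show (Mᵀ * M).IsHermitian by simpa using Matrix.isHermitian_conjTranspose_mul_self M).eigenvalues i)


lemma exists_Z' {m n : ℕ} (A : Matrix (Fin m) (Fin n) ℝ) :
    ∃ Z : Matrix (Fin n) (Fin n) ℝ, A = A * Z ∧ Z.rank = A.rank := by
  obtain ⟨W, hW⟩ := Submodule.exists_isCompl (LinearMap.ker A.mulVecLin)
  set K := LinearMap.ker A.mulVecLin with hK
  set π : (Fin n → ℝ) →ₗ[ℝ] (Fin n → ℝ) :=
    W.subtype ∘ₗ W.projectionOnto K hW.symm with hπ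
  have hdiff : ∀ v, v - π v ∈ K := by
    intro v
    have h2 : (K.projectionOnto W hW v : Fin n → ℝ) + (W.projectionOnto K hW.symm v : Fin n → ℝ) = v :=
      Submodule.projection_add_projection_eq_self hW v
    have : v - π v = (K.projectionOnto W hW v : Fin n → ℝ) := by
      simp only [hπ, LinearMap.comp_apply, Submodule.subtype_apply]
      linear_combination -h2
    rw [this]; exact Submodule.coe_mem _
  have hmv : (LinearMap.toMatrix' π).mulVecLin = π := by
    rw [← Matrix.toLin'_apply', Matrix.toLin'_toMatrix']
  refine ⟨LinearMap.toMatrix' π, ?_, ?_⟩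
  · have hcomp : (A * LinearMap.toMatrix' π).mulVecLin = A.mulVecLin := by
      rw [Matrix.mulVecLin_mul, hmv]
      apply LinearMap.ext; intro v
      have h0 : A.mulVecLin (v - π v) = 0 := hdiff v
      rw [map_sub, sub_eq_zero] at h0
      simpa using h0.symm
    exact (Matrix.toLin'.injective (by rw [Matrix.toLin'_apply', Matrix.toLin'_apply', hcomp])).symm
  · have hrange : LinearMap.range π = W := by
      rw [hπ, LinearMap.range_comp, Submodule.range_projectionOnto, Submodule.map_top,
        Submodule.range_subtype]
    have h1 : (LinearMap.toMatrix' π).rank = Module.finrank ℝ W := by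
      rw [Matrix.rank, hmv, hrange]
    have h2 : Module.finrank ℝ K + Module.finrank ℝ W = n := by
      simpa using Submodule.finrank_add_eq_of_isCompl hW
    have h3 : A.rank + Module.finrank ℝ K = n := by
      simpa [Matrix.rank] using LinearMap.finrank_range_add_finrank_ker A.mulVecLin
    omega


theorem stmt_17 {m n : ℕ} (X : Matrix (Fin m) (Fin n) ℝ) (lam : ℝ) (hlam : 0 < lam)
    (f : Matrix (Fin m) (Fin n) ℝ → ℝ) :
    sInf {c : ℝ | ∃ (Z : Matrix (Fin n) (Fin n) ℝ) (E : Matrix (Fin m) (Fin n) ℝ),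
        X - E = (X - E) * Z ∧ c = (Z.rank : ℝ) + lam * f E}
      = sInf {c : ℝ | ∃ E : Matrix (Fin m) (Fin n) ℝ,
        c = ((X - E).rank : ℝ) + lam * f E} := by
  set S := {c : ℝ | ∃ (Z : Matrix (Fin n) (Fin n) ℝ) (E : Matrix (Fin m) (Fin n) ℝ),
      X - E = (X - E) * Z ∧ c = (Z.rank : ℝ) + lam * f E} with hS
  set T := {c : ℝ | ∃ E : Matrix (Fin m) (Fin n) ℝ,
      c = ((X - E).rank : ℝ) + lam * f E} with hT
  have hST : T ⊆ S := by
    rintro c ⟨E, rfl⟩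
    obtain ⟨Z, hZ1, hZ2⟩ := exists_Z' (X - E)
    exact ⟨Z, E, hZ1, by rw [hZ2]⟩
  have hdom : ∀ c ∈ S, ∃ d ∈ T, d ≤ c := by
    rintro c ⟨Z, E, hZE, rfl⟩
    refine ⟨((X - E).rank : ℝ) + lam * f E, ⟨E, rfl⟩, ?_⟩
    have : (X - E).rank ≤ Z.rank := by
      calc (X - E).rank = ((X - E) * Z).rank := by rw [← hZE]
        _ ≤ Z.rank := Matrix.rank_mul_le_right _ _
    have := (Nat.cast_le (α := ℝ)).2 this
    linarith
  have hTne : T.Nonempty := ⟨_, ⟨0, rfl⟩⟩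
  have hSne : S.Nonempty := ⟨_, hST hTne.choose_spec⟩
  by_cases hbd : BddBelow T
  · have hbS : BddBelow S := by
      obtain ⟨b, hb⟩ := hbd
      exact ⟨b, fun c hc => by
        obtain ⟨d, hdT, hdc⟩ := hdom c hc
        exact le_trans (hb hdT) hdc⟩
    apply le_antisymm
    · exact le_csInf hTne fun d hd => csInf_le hbS (hST hd)
    · refine le_csInf hSne fun c hc => ?_
      obtain ⟨d, hdT, hdc⟩ := hdom c hc
      exact le_trans (csInf_le hbd hdT) hdc
  · have hbS : ¬ BddBelow S := by
      intro ⟨b, hb⟩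
      exact hbd ⟨b, fun d hd => hb (hST hd)⟩
    rw [Real.sInf_of_not_bddBelow hbS, Real.sInf_of_not_bddBelow hbd]
end

section
/- Let X = UΣVᵀ be the SVD of X and r = argmin_k (k + λΣ_{i>k} σ_i²). Then (Z*, A*) with A* = U₁Σ₁V₁ᵀ (top-r truncated SVD) and Z* = V₁V₁ᵀ is an optimal solution of min_{A,Z} ‖Z‖_* + λ‖X − A‖_F² subject to A = AZ. -/
open Matrix

def frobSq {p q : ℕ} (M : Matrix (Fin p) (Fin q) ℝ) : ℝ := ∑ i, ∑ j, (M i j) ^ 2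

noncomputable def truncS (m n : ℕ) (σ : Fin (min m n) → ℝ) (k : ℕ) : Matrix (Fin m) (Fin n) ℝ :=
  Matrix.of fun i j =>
    if h : (i : ℕ) = (j : ℕ) ∧ (i : ℕ) < k then
      σ ⟨i, lt_min i.isLt (by rw [h.1]; exact j.isLt)⟩ else 0

noncomputable def tailSum (m n : ℕ) (σ : Fin (min m n) → ℝ) (k : ℕ) : ℝ :=
  ∑ i ∈ Finset.univ.filter (fun i : Fin (min m n) => k ≤ (i : ℕ)), σ i ^ 2

open Finset


lemma conjT_real {p q : ℕ} (M : Matrix (Fin p) (Fin q) ℝ) : Mᴴ = Mᵀ := by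
  ext i j; simp [conjTranspose_apply]

lemma dot_self_nonneg' {p : ℕ} (x : Fin p → ℝ) : 0 ≤ x ⬝ᵥ x :=
  Finset.sum_nonneg fun _ _ => mul_self_nonneg _

lemma mulVec_dot {p q : ℕ} (M : Matrix (Fin p) (Fin q) ℝ) (x : Fin q → ℝ) (y : Fin p → ℝ) :
    (M *ᵥ x) ⬝ᵥ y = x ⬝ᵥ (Mᵀ *ᵥ y) := by
  rw [← Matrix.vecMul_transpose, Matrix.dotProduct_mulVec]

lemma dot_cs {p : ℕ} (x y : Fin p → ℝ) :
    x ⬝ᵥ y ≤ Real.sqrt (x ⬝ᵥ x) * Real.sqrt (y ⬝ᵥ y) := by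
  have h := Finset.sum_mul_sq_le_sq_mul_sq Finset.univ x y
  have h2 : (x ⬝ᵥ y) ^ 2 ≤ (x ⬝ᵥ x) * (y ⬝ᵥ y) := by
    simpa [dotProduct, pow_two] using h
  calc x ⬝ᵥ y ≤ |x ⬝ᵥ y| := le_abs_self _
    _ = Real.sqrt ((x ⬝ᵥ y) ^ 2) := (Real.sqrt_sq_eq_abs _).symm
    _ ≤ Real.sqrt ((x ⬝ᵥ x) * (y ⬝ᵥ y)) := Real.sqrt_le_sqrt h2
    _ = _ := Real.sqrt_mul (dot_self_nonneg' x) _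

lemma proj_dot_eq {p : ℕ} {P : Matrix (Fin p) (Fin p) ℝ} (hPt : Pᵀ = P) (hPP : P * P = P)
    (v : Fin p → ℝ) : (P *ᵥ v) ⬝ᵥ (P *ᵥ v) = v ⬝ᵥ (P *ᵥ v) := by
  rw [mulVec_dot, hPt, mulVec_mulVec, hPP]

lemma proj_dot_le {p : ℕ} {P : Matrix (Fin p) (Fin p) ℝ} (hPt : Pᵀ = P) (hPP : P * P = P)
    (v : Fin p → ℝ) : (P *ᵥ v) ⬝ᵥ (P *ᵥ v) ≤ v ⬝ᵥ v := by
  have h1 := proj_dot_eq hPt hPP v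
  have h2 : v ⬝ᵥ (P *ᵥ v) ≤ Real.sqrt (v ⬝ᵥ v) * Real.sqrt ((P *ᵥ v) ⬝ᵥ (P *ᵥ v)) :=
    dot_cs v (P *ᵥ v)
  set s := (P *ᵥ v) ⬝ᵥ (P *ᵥ v) with hs
  have hs0 : 0 ≤ s := dot_self_nonneg' _
  have hv0 : 0 ≤ v ⬝ᵥ v := dot_self_nonneg' _
  have e1 : Real.sqrt s ^ 2 = s := Real.sq_sqrt hs0
  have e2 : Real.sqrt (v ⬝ᵥ v) ^ 2 = v ⬝ᵥ v := Real.sq_sqrt hv0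
  nlinarith [Real.sqrt_nonneg s, Real.sqrt_nonneg (v ⬝ᵥ v),
    sq_nonneg (Real.sqrt (v ⬝ᵥ v) - Real.sqrt s)]

lemma frobSq_eq_trace {p q : ℕ} (M : Matrix (Fin p) (Fin q) ℝ) :
    frobSq M = (Mᵀ * M).trace := by
  unfold frobSq
  rw [Finset.sum_comm]
  simp [Matrix.trace, Matrix.diag, Matrix.mul_apply, pow_two]

lemma frobSq_nonneg {p q : ℕ} (M : Matrix (Fin p) (Fin q) ℝ) : 0 ≤ frobSq M :=
  Finset.sum_nonneg fun _ _ => Finset.sum_nonneg fun _ _ => sq_nonneg _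

lemma frobSq_mul_orth_left {p q : ℕ} (W : Matrix (Fin p) (Fin p) ℝ) (hW : Wᵀ * W = 1)
    (M : Matrix (Fin p) (Fin q) ℝ) : frobSq (W * M) = frobSq M := by
  rw [frobSq_eq_trace, frobSq_eq_trace, Matrix.transpose_mul]
  rw [Matrix.mul_assoc, ← Matrix.mul_assoc Wᵀ, hW, Matrix.one_mul]

lemma frobSq_mul_orth_right {p q : ℕ} (W : Matrix (Fin q) (Fin q) ℝ) (hW : Wᵀ * W = 1)
    (M : Matrix (Fin p) (Fin q) ℝ) : frobSq (M * Wᵀ) = frobSq M := by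
  have hW' : W * Wᵀ = 1 := mul_eq_one_comm.mp hW
  rw [frobSq_eq_trace, frobSq_eq_trace, Matrix.transpose_mul, Matrix.transpose_transpose]
  rw [show W * Mᵀ * (M * Wᵀ) = W * ((Mᵀ * M) * Wᵀ) by rw [Matrix.mul_assoc, Matrix.mul_assoc],
    Matrix.trace_mul_comm, Matrix.mul_assoc, hW, Matrix.mul_one]


lemma trace_conj_orth {p : ℕ} (W M : Matrix (Fin p) (Fin p) ℝ) (hW : Wᵀ * W = 1) :
    (Wᵀ * M * W).trace = M.trace := by
  have hW' : W * Wᵀ = 1 := mul_eq_one_comm.mp hW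
  rw [Matrix.trace_mul_cycle, hW', Matrix.one_mul]

lemma diag_conj_entry {p : ℕ} (W M : Matrix (Fin p) (Fin p) ℝ) (i : Fin p) :
    (Wᵀ * M * W) i i = (fun a => W a i) ⬝ᵥ (M *ᵥ fun a => W a i) := by
  simp only [Matrix.mul_apply, Matrix.mulVec, Matrix.transpose_apply, dotProduct,
    Finset.mul_sum, Finset.sum_mul]
  rw [Finset.sum_comm]
  apply Finset.sum_congr rfl; intro a _; apply Finset.sum_congr rfl; intro b _; ring

lemma trace_le_nuclear {p : ℕ} (Z P : Matrix (Fin p) (Fin p) ℝ)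
    (hPt : Pᵀ = P) (hPP : P * P = P) (hPZ : P * Z = P) :
    P.trace ≤ nuclearNorm Z := by
  have hH : (Zᵀ * Z).IsHermitian := by simpa using Matrix.isHermitian_conjTranspose_mul_self Z
  set W : Matrix (Fin p) (Fin p) ℝ := (hH.eigenvectorUnitary : Matrix (Fin p) (Fin p) ℝ) with hWdef
  have hWt : Wᵀ * W = 1 := by
    rw [← conjT_real]
    exact Matrix.mem_unitaryGroup_iff'.mp hH.eigenvectorUnitary.2
  have hcol : ∀ i : Fin p, (fun a => W a i) = ⇑(hH.eigenvectorBasis i) := by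
    intro i; funext a; exact Matrix.IsHermitian.eigenvectorUnitary_apply hH a i
  have hwnorm : ∀ i : Fin p, (fun a => W a i) ⬝ᵥ (fun a => W a i) = 1 := by
    intro i
    have := congrArg (fun M => M i i) hWt
    simp only [Matrix.one_apply_eq] at this
    rw [← this]
    simp [Matrix.mul_apply, dotProduct, Matrix.transpose_apply]
  have htr : P.trace = ∑ i, (fun a => W a i) ⬝ᵥ ((P * Z) *ᵥ fun a => W a i) := by
    have h0 : P.trace = (P * Z).trace := by rw [hPZ]
    rw [h0, show (P * Z).trace = (Wᵀ * (P * Z) * W).trace from (trace_conj_orth W _ hWt).symm]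
    rw [Matrix.trace]
    apply Finset.sum_congr rfl
    intro i _
    exact diag_conj_entry W (P * Z) i
  rw [htr, nuclearNorm]
  apply Finset.sum_le_sum
  intro i _
  set w := fun a => W a i with hw
  have heig : (Zᵀ * Z) *ᵥ w = hH.eigenvalues i • w := by
    rw [hw, hcol i]; exact hH.mulVec_eigenvectorBasis i
  have hyy : (Z *ᵥ w) ⬝ᵥ (Z *ᵥ w) = hH.eigenvalues i := by
    rw [mulVec_dot, Matrix.mulVec_mulVec, heig]
    simp only [dotProduct_smul, smul_eq_mul]
    rw [hwnorm i, mul_one]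
  calc w ⬝ᵥ ((P * Z) *ᵥ w)
      = (P *ᵥ w) ⬝ᵥ (Z *ᵥ w) := by
        have hstep : w ⬝ᵥ (P *ᵥ (Z *ᵥ w)) = (Pᵀ *ᵥ w) ⬝ᵥ (Z *ᵥ w) := by
          rw [mulVec_dot Pᵀ w (Z *ᵥ w), Matrix.transpose_transpose]
        rw [← Matrix.mulVec_mulVec, hstep, hPt]
    _ ≤ Real.sqrt ((P *ᵥ w) ⬝ᵥ (P *ᵥ w)) * Real.sqrt ((Z *ᵥ w) ⬝ᵥ (Z *ᵥ w)) := dot_cs _ _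
    _ ≤ 1 * Real.sqrt (hH.eigenvalues i) := by
        rw [hyy]
        apply mul_le_mul_of_nonneg_right _ (Real.sqrt_nonneg _)
        have := proj_dot_le hPt hPP w
        calc Real.sqrt ((P *ᵥ w) ⬝ᵥ (P *ᵥ w)) ≤ Real.sqrt (w ⬝ᵥ w) := Real.sqrt_le_sqrt this
          _ = 1 := by rw [hwnorm i, Real.sqrt_one]
    _ = Real.sqrt (hH.eigenvalues i) := one_mul _

lemma sum_indicator_lt {N k : ℕ} (hkN : k ≤ N) :
    ∑ j ∈ Finset.range N, (if j < k then (1:ℝ) else 0) = k := by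
  rw [← Finset.sum_subset (Finset.range_subset_range.mpr hkN)
    (fun x _ hx => by simp [Finset.mem_range] at hx; simp [hx])]
  have h2 : ∑ j ∈ Finset.range k, (if j < k then (1:ℝ) else 0) = ∑ _j ∈ Finset.range k, (1:ℝ) :=
    Finset.sum_congr rfl (fun x hx => by simp only [Finset.mem_range] at hx; simp [hx])
  rw [h2]
  simp

lemma rearr {n : ℕ} (k : ℕ) (d t : Fin n → ℝ)
    (hd : ∀ i j : Fin n, i ≤ j → d j ≤ d i) (hd0 : ∀ i, 0 ≤ d i)
    (ht0 : ∀ i, 0 ≤ t i) (ht1 : ∀ i, t i ≤ 1) (hts : ∑ i, t i = (k:ℝ)) :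
    ∑ i ∈ Finset.univ.filter (fun i : Fin n => k ≤ (i:ℕ)), d i + ∑ i, d i * t i ≤ ∑ i, d i := by
  classical
  have hfc : Finset.univ.filter (fun i : Fin n => k ≤ (i:ℕ))
      = Finset.univ.filter (fun i : Fin n => ¬ ((i:ℕ) < k)) := by
    apply Finset.filter_congr; intro i _; simp [not_lt]
  by_cases hkn : k < n
  · set L := Finset.univ.filter (fun i : Fin n => (i:ℕ) < k) with hL
    set S := Finset.univ.filter (fun i : Fin n => ¬ ((i:ℕ) < k)) with hS
    set c := d ⟨k, hkn⟩ with hc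
    have hsplit : ∀ f : Fin n → ℝ, ∑ i ∈ L, f i + ∑ i ∈ S, f i = ∑ i, f i := by
      intro f; exact Finset.sum_filter_add_sum_filter_not _ _ f
    have hLcard : ∑ i ∈ L, (1:ℝ) = k := by
      rw [hL, Finset.sum_filter]
      rw [Fin.sum_univ_eq_sum_range (fun j => if j < k then (1:ℝ) else 0) n]
      exact sum_indicator_lt hkn.le
    have A1 : ∑ i ∈ S, d i * t i ≤ c * ∑ i ∈ S, t i := by
      rw [Finset.mul_sum]
      apply Finset.sum_le_sum
      intro i hi
      simp only [hS, Finset.mem_filter, not_lt] at hi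
      exact mul_le_mul_of_nonneg_right (hd ⟨k, hkn⟩ i (by simp [Fin.le_def]; exact hi.2)) (ht0 i)
    have A2 : ∑ i ∈ L, t i + ∑ i ∈ S, t i = (k:ℝ) := by rw [hsplit]; exact hts
    have A4 : c * ∑ i ∈ L, (1 - t i) ≤ ∑ i ∈ L, d i * (1 - t i) := by
      rw [Finset.mul_sum]
      apply Finset.sum_le_sum
      intro i hi
      simp only [hL, Finset.mem_filter] at hi
      have : c ≤ d i := hd i ⟨k, hkn⟩ (by simp [Fin.le_def]; exact hi.2.le)
      exact mul_le_mul_of_nonneg_right this (by linarith [ht1 i])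
    have E1 : ∑ i ∈ L, (1 - t i) = (k:ℝ) - ∑ i ∈ L, t i := by
      rw [Finset.sum_sub_distrib, hLcard]
    have E2 : ∑ i ∈ L, d i * (1 - t i) = ∑ i ∈ L, d i - ∑ i ∈ L, d i * t i := by
      rw [← Finset.sum_sub_distrib]; apply Finset.sum_congr rfl; intro i _; ring
    have B1 := hsplit d
    have B2 := hsplit (fun i => d i * t i)
    rw [hfc]
    rw [E1] at A4
    rw [E2] at A4
    have E3 : (k:ℝ) - ∑ i ∈ L, t i = ∑ i ∈ S, t i := by linarith
    rw [E3] at A4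
    linarith
  · have hS : Finset.univ.filter (fun i : Fin n => k ≤ (i:ℕ)) = ∅ := by
      apply Finset.filter_false_of_mem
      intro i _
      push_neg at hkn
      omega
    rw [hS, Finset.sum_empty, zero_add]
    apply Finset.sum_le_sum
    intro i _
    exact mul_le_of_le_one_right (hd0 i) (ht1 i)

lemma eigbasis_dot_one {p : ℕ} {M : Matrix (Fin p) (Fin p) ℝ} (hM : M.IsHermitian) (i : Fin p) :
    ⇑(hM.eigenvectorBasis i) ⬝ᵥ ⇑(hM.eigenvectorBasis i) = 1 := by
  have h1 := orthonormal_iff_ite.mp hM.eigenvectorBasis.orthonormal i i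
  simp only [if_pos rfl] at h1
  rw [PiLp.inner_apply] at h1
  simpa [dotProduct, pow_two] using h1

lemma trace_eq_sum_eig {p : ℕ} {M : Matrix (Fin p) (Fin p) ℝ} (hM : M.IsHermitian) :
    M.trace = ∑ i, hM.eigenvalues i := by
  conv_lhs => rw [hM.spectral_theorem, Unitary.conjStarAlgAut_apply]
  rw [Matrix.trace_mul_cycle]
  rw [show (star (hM.eigenvectorUnitary : Matrix (Fin p) (Fin p) ℝ)) *
      (hM.eigenvectorUnitary : Matrix (Fin p) (Fin p) ℝ) = 1 from
    Matrix.mem_unitaryGroup_iff'.mp hM.eigenvectorUnitary.2, Matrix.one_mul]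
  simp [Matrix.trace_diagonal]

lemma sqrt_eig_idem {p : ℕ} {M : Matrix (Fin p) (Fin p) ℝ} (hM : M.IsHermitian)
    (hMM : M * M = M) (i : Fin p) :
    Real.sqrt (hM.eigenvalues i) = hM.eigenvalues i := by
  set v := ⇑(hM.eigenvectorBasis i) with hv
  set μ := hM.eigenvalues i with hμ
  have h1 : M *ᵥ v = μ • v := hM.mulVec_eigenvectorBasis i
  have h2 : (μ * μ) • v = μ • v := by
    have : M *ᵥ (M *ᵥ v) = (μ * μ) • v := by
      rw [h1, Matrix.mulVec_smul, h1, smul_smul]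
    rw [Matrix.mulVec_mulVec, hMM, h1] at this; exact this.symm
  have hvv : v ⬝ᵥ v = 1 := eigbasis_dot_one hM i
  have hmu : μ * μ = μ := by
    by_contra hne
    have hz : v = 0 := by
      funext a
      have := congrFun h2 a
      simp only [Pi.smul_apply, smul_eq_mul] at this
      have h3 : (μ * μ - μ) * v a = 0 := by ring_nf; linarith [this]
      rcases mul_eq_zero.mp h3 with h | h
      · exact absurd (by linarith [h] : μ * μ = μ) hne
      · exact h
    rw [hz] at hvv
    simp [dotProduct] at hvv
  have : μ = 0 ∨ μ = 1 := by
    have h4 : μ * (μ - 1) = 0 := by ring_nf; linarith [hmu]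
    rcases mul_eq_zero.mp h4 with h | h
    · exact Or.inl h
    · exact Or.inr (by linarith)
  rcases this with h | h <;> rw [h] <;> simp



noncomputable def Dfun (m n : ℕ) (σ : Fin (min m n) → ℝ) : ℕ → ℝ :=
  fun a => if h : a < min m n then σ ⟨a, h⟩ ^ 2 else 0

lemma truncS_apply_eq (m n : ℕ) (σ : Fin (min m n) → ℝ) (k : ℕ) (i : Fin m) (j : Fin n)
    (hij : (i:ℕ) = (j:ℕ)) (hik : (i:ℕ) < k) (h : (i:ℕ) < min m n) :
    truncS m n σ k i j = σ ⟨i, h⟩ := by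
  simp only [truncS, Matrix.of_apply]; rw [dif_pos ⟨hij, hik⟩]

lemma truncS_apply_ne (m n : ℕ) (σ : Fin (min m n) → ℝ) (k : ℕ) (i : Fin m) (j : Fin n)
    (h : ¬((i:ℕ) = (j:ℕ) ∧ (i:ℕ) < k)) : truncS m n σ k i j = 0 := by
  simp only [truncS, Matrix.of_apply]; rw [dif_neg h]

lemma Dfun_nonneg (m n : ℕ) (σ : Fin (min m n) → ℝ) (a : ℕ) : 0 ≤ Dfun m n σ a := by
  unfold Dfun; split
  · exact sq_nonneg _
  · exact le_refl 0

lemma Dfun_anti (m n : ℕ) (σ : Fin (min m n) → ℝ) (hσ0 : ∀ i, 0 ≤ σ i) (hσ : Antitone σ)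
    {a b : ℕ} (hab : a ≤ b) : Dfun m n σ b ≤ Dfun m n σ a := by
  unfold Dfun
  by_cases hb : b < min m n
  · have ha : a < min m n := lt_of_le_of_lt hab hb
    rw [dif_pos hb, dif_pos ha]
    have h1 : σ ⟨b, hb⟩ ≤ σ ⟨a, ha⟩ := hσ (by exact hab)
    exact pow_le_pow_left₀ (hσ0 _) h1 2
  · rw [dif_neg hb]
    exact Dfun_nonneg m n σ a

lemma tailSum_eq_sum_range (m n : ℕ) (σ : Fin (min m n) → ℝ) (k : ℕ) :
    tailSum m n σ k = ∑ j ∈ Finset.range (min m n), (if k ≤ j then Dfun m n σ j else 0) := by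
  rw [tailSum, Finset.sum_filter]
  rw [show (∑ i : Fin (min m n), if k ≤ (i:ℕ) then σ i ^ 2 else 0)
      = ∑ i : Fin (min m n), (fun j => if k ≤ j then Dfun m n σ j else 0) (i:ℕ) from
    Finset.sum_congr rfl fun i _ => by
      by_cases h : k ≤ (i:ℕ) <;> simp [h, Dfun, i.isLt]]
  exact Fin.sum_univ_eq_sum_range (fun j => if k ≤ j then Dfun m n σ j else 0) (min m n)

lemma tailSum_eq_filter_n (m n : ℕ) (σ : Fin (min m n) → ℝ) (k : ℕ) :
    tailSum m n σ k
      = ∑ i ∈ Finset.univ.filter (fun i : Fin n => k ≤ (i:ℕ)), Dfun m n σ (i:ℕ) := by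
  rw [tailSum_eq_sum_range, Finset.sum_filter]
  rw [Fin.sum_univ_eq_sum_range (fun j => if k ≤ j then Dfun m n σ j else 0) n]
  apply Finset.sum_subset (Finset.range_subset_range.mpr (min_le_right m n))
  intro x _ hx
  simp only [Finset.mem_range, not_lt] at hx
  have : Dfun m n σ x = 0 := by unfold Dfun; rw [dif_neg (not_lt.mpr hx)]
  simp [this]

lemma truncS_tmul (m n : ℕ) (σ : Fin (min m n) → ℝ) :
    (truncS m n σ (min m n))ᵀ * truncS m n σ (min m n)
      = Matrix.diagonal (fun j : Fin n => Dfun m n σ (j:ℕ)) := by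
  ext j j'
  rw [Matrix.mul_apply, Matrix.diagonal_apply]
  by_cases hjj : j = j'
  · subst hjj
    rw [if_pos rfl]
    by_cases hj : (j:ℕ) < min m n
    · have hjm : (j:ℕ) < m := lt_of_lt_of_le hj (min_le_left m n)
      rw [Finset.sum_eq_single (⟨(j:ℕ), hjm⟩ : Fin m)]
      · rw [Matrix.transpose_apply, truncS_apply_eq m n σ (min m n) _ _ rfl hj hj]
        simp [Dfun, hj, pow_two]
      · intro b _ hb
        have hbv : (b:ℕ) ≠ (j:ℕ) := fun h => hb (Fin.ext h)
        rw [Matrix.transpose_apply, truncS_apply_ne m n σ _ _ _ (fun h => hbv h.1), zero_mul]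
      · intro h; exact absurd (Finset.mem_univ _) h
    · have : Dfun m n σ (j:ℕ) = 0 := by unfold Dfun; rw [dif_neg hj]
      rw [this]
      apply Finset.sum_eq_zero
      intro b _
      rw [Matrix.transpose_apply]
      by_cases hbj : (b:ℕ) = (j:ℕ)
      · rw [truncS_apply_ne m n σ _ _ _ (fun h => hj (hbj ▸ h.2)), zero_mul]
      · rw [truncS_apply_ne m n σ _ _ _ (fun h => hbj h.1), zero_mul]
  · rw [if_neg hjj]
    apply Finset.sum_eq_zero
    intro b _
    rw [Matrix.transpose_apply]
    by_cases hbj : (b:ℕ) = (j:ℕ)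
    · have hne : ¬ ((b:ℕ) = (j':ℕ) ∧ (b:ℕ) < min m n) := by
        rintro ⟨h1, _⟩
        exact hjj (Fin.ext (hbj.symm.trans h1))
      rw [truncS_apply_ne m n σ _ _ _ hne, mul_zero]
    · rw [truncS_apply_ne m n σ _ _ _ (fun h => hbj h.1), zero_mul]

lemma trace_diag_mul {n : ℕ} (d : Fin n → ℝ) (N : Matrix (Fin n) (Fin n) ℝ) :
    (Matrix.diagonal d * N).trace = ∑ j, d j * N j j := by
  simp [Matrix.trace, Matrix.diag, Matrix.diagonal_mul]

lemma frobSq_diagLike {m n : ℕ} (f : ℕ → ℝ) (M : Matrix (Fin m) (Fin n) ℝ)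
    (hM : ∀ (i : Fin m) (j : Fin n), M i j = if (i:ℕ) = (j:ℕ) then f (i:ℕ) else 0) :
    frobSq M = ∑ a ∈ Finset.range (min m n), f a ^ 2 := by
  unfold frobSq
  have hrow : ∀ i : Fin m, (∑ j, (M i j) ^ 2) = if (i:ℕ) < n then f (i:ℕ) ^ 2 else 0 := by
    intro i
    by_cases hin : (i:ℕ) < n
    · rw [if_pos hin, Finset.sum_eq_single (⟨(i:ℕ), hin⟩ : Fin n)]
      · rw [hM, if_pos rfl]
      · intro b _ hb
        rw [hM, if_neg (fun h => hb (Fin.ext h.symm)), zero_pow (by norm_num)]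
      · intro h; exact absurd (Finset.mem_univ _) h
    · rw [if_neg hin]
      apply Finset.sum_eq_zero
      intro b _
      rw [hM, if_neg (by omega), zero_pow (by norm_num)]
  rw [Finset.sum_congr rfl (fun i _ => hrow i)]
  rw [show (∑ i : Fin m, if (i:ℕ) < n then f (i:ℕ) ^ 2 else 0)
      = ∑ i : Fin m, (fun a => if a < n then f a ^ 2 else 0) (i:ℕ) from rfl]
  rw [Fin.sum_univ_eq_sum_range (fun a => if a < n then f a ^ 2 else 0) m]
  rw [← Finset.sum_subset (Finset.range_subset_range.mpr (min_le_left m n))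
    (fun x hx hx2 => by
      simp only [Finset.mem_range] at hx hx2
      rw [if_neg (by omega)])]
  apply Finset.sum_congr rfl
  intro a ha
  simp only [Finset.mem_range] at ha
  rw [if_pos (by omega)]

lemma frobSq_truncS_diff {m n : ℕ} (σ : Fin (min m n) → ℝ) (r : ℕ) :
    frobSq (truncS m n σ (min m n) - truncS m n σ r) = tailSum m n σ r := by
  rw [frobSq_diagLike (fun a => if h : a < min m n then (if r ≤ a then σ ⟨a, h⟩ else 0) else 0)]
  · rw [tailSum_eq_sum_range]
    apply Finset.sum_congr rfl
    intro a ha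
    simp only [Finset.mem_range] at ha
    rw [dif_pos ha]
    by_cases hra : r ≤ a
    · rw [if_pos hra, if_pos hra]
      simp [Dfun, ha]
    · rw [if_neg hra, if_neg hra]
      norm_num
  · intro i j
    rw [Matrix.sub_apply]
    by_cases hij : (i:ℕ) = (j:ℕ)
    · have hi : (i:ℕ) < min m n := lt_min i.isLt (hij ▸ j.isLt)
      rw [if_pos hij, dif_pos hi]
      rw [truncS_apply_eq m n σ (min m n) i j hij hi hi]
      by_cases hir : (i:ℕ) < r
      · rw [truncS_apply_eq m n σ r i j hij hir hi, if_neg (by omega), sub_self]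
      · rw [truncS_apply_ne m n σ r i j (fun h => hir h.2), if_pos (by omega), sub_zero]
    · rw [if_neg hij, truncS_apply_ne m n σ _ _ _ (fun h => hij h.1),
        truncS_apply_ne m n σ _ _ _ (fun h => hij h.1), sub_self]

lemma one_sub_proj_t {p : ℕ} {P : Matrix (Fin p) (Fin p) ℝ} (hPt : Pᵀ = P) :
    (1 - P)ᵀ = 1 - P := by
  rw [Matrix.transpose_sub, Matrix.transpose_one, hPt]

lemma one_sub_proj_idem {p : ℕ} {P : Matrix (Fin p) (Fin p) ℝ} (hPP : P * P = P) :
    (1 - P) * (1 - P) = 1 - P := by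
  rw [Matrix.sub_mul, Matrix.mul_sub, Matrix.mul_sub, hPP, Matrix.mul_one, Matrix.mul_one,
    Matrix.one_mul]
  abel

lemma frobSq_mul_proj_trace {p q : ℕ} (M : Matrix (Fin p) (Fin q) ℝ)
    {P : Matrix (Fin q) (Fin q) ℝ} (hPt : Pᵀ = P) (hPP : P * P = P) :
    frobSq (M * P) = (P * (Mᵀ * M)).trace := by
  rw [frobSq_eq_trace, Matrix.transpose_mul, hPt]
  rw [show P * Mᵀ * (M * P) = P * (Mᵀ * M) * P by rw [Matrix.mul_assoc, Matrix.mul_assoc,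
    Matrix.mul_assoc]]
  rw [Matrix.trace_mul_cycle, ← Matrix.mul_assoc, hPP, Matrix.mul_assoc]

lemma frobSq_split_proj {p q : ℕ} (M : Matrix (Fin p) (Fin q) ℝ)
    {P : Matrix (Fin q) (Fin q) ℝ} (hPt : Pᵀ = P) (hPP : P * P = P) :
    frobSq (M * (1 - P)) = frobSq M - frobSq (M * P) := by
  rw [frobSq_mul_proj_trace M (one_sub_proj_t hPt) (one_sub_proj_idem hPP),
    frobSq_mul_proj_trace M hPt hPP, frobSq_eq_trace]
  rw [Matrix.sub_mul, Matrix.one_mul, Matrix.trace_sub]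

lemma col_dot_one {p : ℕ} {V : Matrix (Fin p) (Fin p) ℝ} (hV : Vᵀ * V = 1) (j : Fin p) :
    (fun a => V a j) ⬝ᵥ (fun a => V a j) = 1 := by
  have := congrArg (fun M => M j j) hV
  simp only [Matrix.one_apply_eq] at this
  rw [← this]
  simp [Matrix.mul_apply, dotProduct, Matrix.transpose_apply]

lemma frob_tail_le {m n : ℕ} (X A : Matrix (Fin m) (Fin n) ℝ)
    (V : Matrix (Fin n) (Fin n) ℝ) (σ : Fin (min m n) → ℝ)
    (hV : Vᵀ * V = 1) (hσ0 : ∀ i, 0 ≤ σ i) (hσ : Antitone σ)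
    (hXtX : Xᵀ * X = V * Matrix.diagonal (fun j : Fin n => Dfun m n σ (j:ℕ)) * Vᵀ)
    (P : Matrix (Fin n) (Fin n) ℝ) (hPt : Pᵀ = P) (hPP : P * P = P)
    (hAP : A * P = A) (k : ℕ) (hk : P.trace = (k:ℝ)) :
    tailSum m n σ k ≤ frobSq (X - A) := by
  set d : Fin n → ℝ := fun j => Dfun m n σ (j:ℕ) with hd
  set t : Fin n → ℝ := fun j => (Vᵀ * P * V) j j with ht
  have ht_eq : ∀ j, t j = ((fun a => V a j) ⬝ᵥ (P *ᵥ fun a => V a j)) :=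
    fun j => diag_conj_entry V P j
  have ht_eq2 : ∀ j, t j = ((P *ᵥ fun a => V a j) ⬝ᵥ (P *ᵥ fun a => V a j)) :=
    fun j => (ht_eq j).trans (proj_dot_eq hPt hPP _).symm
  have ht0 : ∀ j, 0 ≤ t j := fun j => (ht_eq2 j) ▸ dot_self_nonneg' _
  have ht1 : ∀ j, t j ≤ 1 := fun j => by
    rw [ht_eq2 j]
    calc (P *ᵥ fun a => V a j) ⬝ᵥ (P *ᵥ fun a => V a j)
        ≤ (fun a => V a j) ⬝ᵥ (fun a => V a j) := proj_dot_le hPt hPP _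
      _ = 1 := col_dot_one hV j
  have hts : ∑ j, t j = (k:ℝ) := by
    have h1 : ∑ j, t j = (Vᵀ * P * V).trace := by simp [Matrix.trace, Matrix.diag, ht]
    rw [h1, trace_conj_orth V P hV, hk]
  have hdanti : ∀ i j : Fin n, i ≤ j → d j ≤ d i := fun i j hij =>
    Dfun_anti m n σ hσ0 hσ (by exact hij)
  have hdnn : ∀ i, 0 ≤ d i := fun i => Dfun_nonneg m n σ _
  have key := rearr k d t hdanti hdnn ht0 ht1 hts
  have e1 : ∑ i ∈ Finset.univ.filter (fun i : Fin n => k ≤ (i:ℕ)), d i = tailSum m n σ k :=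
    (tailSum_eq_filter_n m n σ k).symm
  have e2 : ∑ j, d j = frobSq X := by
    rw [frobSq_eq_trace, hXtX, Matrix.trace_mul_cycle, hV, Matrix.one_mul]
    simp [Matrix.trace_diagonal, hd]
  have e3 : ∑ j, d j * t j = frobSq (X * P) := by
    rw [frobSq_mul_proj_trace X hPt hPP, hXtX]
    simp only [← Matrix.mul_assoc]
    rw [Matrix.trace_mul_comm]
    simp only [← Matrix.mul_assoc]
    rw [Matrix.trace_mul_comm, trace_diag_mul]
  have hchain1 : tailSum m n σ k ≤ frobSq X - frobSq (X * P) := by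
    rw [← e1, ← e2, ← e3]; linarith
  have hXA : (X - A) * (1 - P) = X * (1 - P) := by
    rw [Matrix.sub_mul, Matrix.mul_sub, Matrix.mul_sub, hAP, Matrix.mul_one, Matrix.mul_one,
      sub_self, sub_zero]
  have hchain2 : frobSq X - frobSq (X * P) = frobSq ((X - A) * (1 - P)) := by
    rw [hXA, frobSq_split_proj X hPt hPP]
  have hchain3 : frobSq ((X - A) * (1 - P)) ≤ frobSq (X - A) := by
    rw [frobSq_split_proj (X - A) hPt hPP]
    linarith [frobSq_nonneg ((X - A) * P)]
  linarith

lemma exists_proj {m n : ℕ} (A : Matrix (Fin m) (Fin n) ℝ) (Z : Matrix (Fin n) (Fin n) ℝ)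
    (hAZ : A = A * Z) :
    ∃ (P : Matrix (Fin n) (Fin n) ℝ) (k : ℕ),
      Pᵀ = P ∧ P * P = P ∧ A * P = A ∧ P * Z = P ∧ P.trace = (k:ℝ) := by
  have hG := Matrix.isHermitian_conjTranspose_mul_self A
  set W : Matrix (Fin n) (Fin n) ℝ := (hG.eigenvectorUnitary : Matrix (Fin n) (Fin n) ℝ)
    with hWdef
  set μ : Fin n → ℝ := hG.eigenvalues with hμdef
  set e : Fin n → ℝ := fun i => if μ i = 0 then 0 else 1 with hedef
  set P : Matrix (Fin n) (Fin n) ℝ := W * Matrix.diagonal e * Wᵀ with hPdef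
  have hWt : Wᵀ * W = 1 := by
    rw [← conjT_real]
    exact Matrix.mem_unitaryGroup_iff'.mp hG.eigenvectorUnitary.2
  have hWW : W * Wᵀ = 1 := mul_eq_one_comm.mp hWt
  have hGT : Aᴴ * A = Aᵀ * A := by rw [conjT_real]
  have hGw : ∀ i : Fin n, (Aᵀ * A) *ᵥ (fun a => W a i) = μ i • (fun a => W a i) := by
    intro i
    have h1 : (fun a => W a i) = ⇑(hG.eigenvectorBasis i) := by
      funext a; exact Matrix.IsHermitian.eigenvectorUnitary_apply hG a i
    rw [h1, ← hGT]
    exact hG.mulVec_eigenvectorBasis i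
  refine ⟨P, (Finset.univ.filter (fun i : Fin n => μ i ≠ 0)).card, ?_, ?_, ?_, ?_, ?_⟩
  · rw [hPdef, Matrix.transpose_mul, Matrix.transpose_mul, Matrix.transpose_transpose,
      Matrix.diagonal_transpose, Matrix.mul_assoc]
  · rw [hPdef]
    rw [show W * Matrix.diagonal e * Wᵀ * (W * Matrix.diagonal e * Wᵀ)
        = W * Matrix.diagonal e * (Wᵀ * W) * Matrix.diagonal e * Wᵀ by
      simp only [Matrix.mul_assoc]]
    rw [hWt, Matrix.mul_one]
    rw [Matrix.mul_assoc W, Matrix.diagonal_mul_diagonal]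
    rw [show (fun i => e i * e i) = e from funext fun i => by
      rw [hedef]; by_cases h : μ i = 0 <;> simp [h]]
  · -- A * P = A
    have hAWD : A * W * Matrix.diagonal e = A * W := by
      ext a i
      rw [Matrix.mul_diagonal]
      by_cases h : μ i = 0
      · have hAw : (A *ᵥ fun b => W b i) ⬝ᵥ (A *ᵥ fun b => W b i) = 0 := by
          rw [mulVec_dot, Matrix.mulVec_mulVec, hGw i, h]
          simp
        have hz : ∀ b : Fin m, (A *ᵥ fun c => W c i) b = 0 := by
          intro b
          have h2 := (Finset.sum_eq_zero_iff_of_nonneg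
            (fun c (_ : c ∈ Finset.univ) => mul_self_nonneg ((A *ᵥ fun c' => W c' i) c))).mp hAw
          exact mul_self_eq_zero.mp (h2 b (Finset.mem_univ b))
        have h3 : (A * W) a i = (A *ᵥ fun c => W c i) a := by
          simp [Matrix.mul_apply, Matrix.mulVec, dotProduct]
        rw [h3, hz a]
        simp [hedef, h]
      · simp [hedef, h]
    rw [hPdef, ← Matrix.mul_assoc, ← Matrix.mul_assoc, hAWD, Matrix.mul_assoc, hWW,
      Matrix.mul_one]
  · -- P * Z = P
    have hDWZ : Matrix.diagonal e * (Wᵀ * Z) = Matrix.diagonal e * Wᵀ := by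
      ext i j
      rw [Matrix.diagonal_mul, Matrix.diagonal_mul]
      by_cases h : μ i = 0
      · simp [hedef, h]
      · have hZw : Zᵀ *ᵥ (fun a => W a i) = (fun a => W a i) := by
          have hw : (fun a => W a i) = (μ i)⁻¹ • ((Aᵀ * A) *ᵥ fun a => W a i) := by
            rw [hGw i, smul_smul, inv_mul_cancel₀ h, one_smul]
          have hZG : Zᵀ * (Aᵀ * A) = Aᵀ * A := by
            rw [← Matrix.mul_assoc, ← Matrix.transpose_mul, ← hAZ]
          conv_lhs => rw [hw]
          rw [Matrix.mulVec_smul, Matrix.mulVec_mulVec, hZG, hGw i, smul_smul,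
            inv_mul_cancel₀ h, one_smul]
        have h4 : (Wᵀ * Z) i j = (Zᵀ *ᵥ fun a => W a i) j := by
          simp [Matrix.mul_apply, Matrix.mulVec, dotProduct, Matrix.transpose_apply, mul_comm]
        rw [h4, hZw]
        simp [Matrix.transpose_apply]
    rw [hPdef, Matrix.mul_assoc, Matrix.mul_assoc, ← Matrix.mul_assoc (Matrix.diagonal e)]
    rw [Matrix.mul_assoc (Matrix.diagonal e), hDWZ, ← Matrix.mul_assoc]
  · -- trace
    rw [hPdef, Matrix.trace_mul_cycle, hWt, Matrix.one_mul, Matrix.trace_diagonal]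
    rw [show (∑ i, e i) = ∑ i, (if μ i ≠ 0 then (1:ℝ) else 0) from
      Finset.sum_congr rfl fun i _ => by rw [hedef]; by_cases h : μ i = 0 <;> simp [h]]
    rw [Finset.sum_boole]


theorem stmt_19 {m n : ℕ} (X : Matrix (Fin m) (Fin n) ℝ)
    (U : Matrix (Fin m) (Fin m) ℝ) (V : Matrix (Fin n) (Fin n) ℝ)
    (σ : Fin (min m n) → ℝ)
    (hU : Uᵀ * U = 1) (hV : Vᵀ * V = 1)
    (hσ0 : ∀ i, 0 ≤ σ i) (hσ : Antitone σ)
    (hX : X = U * truncS m n σ (min m n) * Vᵀ)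
    (lam : ℝ) (hlam : 0 < lam)
    (r : ℕ) (hrn : r ≤ n)
    (hr : ∀ k : ℕ, (r : ℝ) + lam * tailSum m n σ r ≤ (k : ℝ) + lam * tailSum m n σ k) :
    let Astar : Matrix (Fin m) (Fin n) ℝ := U * truncS m n σ r * Vᵀ
    let V₁ : Matrix (Fin n) (Fin r) ℝ := V.submatrix id (Fin.castLE hrn)
    let Zstar : Matrix (Fin n) (Fin n) ℝ := V₁ * V₁ᵀ
    Astar = Astar * Zstar ∧
    ∀ (A : Matrix (Fin m) (Fin n) ℝ) (Z : Matrix (Fin n) (Fin n) ℝ),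
      A = A * Z →
      nuclearNorm Zstar + lam * frobSq (X - Astar)
        ≤ nuclearNorm Z + lam * frobSq (X - A) := by
  intro Astar V₁ Zstar
  set S := truncS m n σ (min m n) with hSdef
  set Sr := truncS m n σ r with hSrdef
  have hV1 : V₁ᵀ * V₁ = 1 := by
    ext a b
    have h := congrArg (fun M => M (Fin.castLE hrn a) (Fin.castLE hrn b)) hV
    simp only [Matrix.mul_apply, Matrix.transpose_apply, Matrix.one_apply, Fin.castLE_inj] at h
    simpa [Matrix.mul_apply, Matrix.transpose_apply, Matrix.one_apply,
      Matrix.submatrix_apply, V₁] using h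
  have hZt : Zstarᵀ = Zstar := by
    show (V₁ * V₁ᵀ)ᵀ = V₁ * V₁ᵀ
    rw [Matrix.transpose_mul, Matrix.transpose_transpose]
  have hZZ : Zstar * Zstar = Zstar := by
    show (V₁ * V₁ᵀ) * (V₁ * V₁ᵀ) = V₁ * V₁ᵀ
    rw [Matrix.mul_assoc, ← Matrix.mul_assoc V₁ᵀ, hV1, Matrix.one_mul]
  have htrZ : Zstar.trace = (r:ℝ) := by
    show (V₁ * V₁ᵀ).trace = (r:ℝ)
    rw [Matrix.trace_mul_comm, hV1, Matrix.trace_one]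
    simp
  have hnucZ : nuclearNorm Zstar = (r:ℝ) := by
    have hH : (Zstarᵀ * Zstar).IsHermitian := by
      simpa using Matrix.isHermitian_conjTranspose_mul_self Zstar
    have hHval : Zstarᴴ * Zstar = Zstar := by rw [conjT_real, hZt, hZZ]
    have hMM : (Zstarᴴ * Zstar) * (Zstarᴴ * Zstar) = Zstarᴴ * Zstar := by rw [hHval, hZZ]
    unfold nuclearNorm
    rw [Finset.sum_congr rfl (fun i _ => sqrt_eig_idem hH hMM i)]
    rw [← trace_eq_sum_eig hH, ← conjT_real, hHval, htrZ]
  have hXsub : X - Astar = U * (S - Sr) * Vᵀ := by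
    show X - U * Sr * Vᵀ = U * (S - Sr) * Vᵀ
    rw [hX, Matrix.mul_sub, Matrix.sub_mul]
  have hfrobA : frobSq (X - Astar) = tailSum m n σ r := by
    rw [hXsub, frobSq_mul_orth_right V hV, frobSq_mul_orth_left U hU, hSdef, hSrdef,
      frobSq_truncS_diff]
  have hVtV1 : ∀ (j : Fin n) (a : Fin r), (Vᵀ * V₁) j a = if (j:ℕ) = (a:ℕ) then 1 else 0 := by
    intro j a
    calc (Vᵀ * V₁) j a = (Vᵀ * V) j (Fin.castLE hrn a) := rfl
      _ = if j = Fin.castLE hrn a then 1 else 0 := by rw [hV]; simp [Matrix.one_apply]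
      _ = if (j:ℕ) = (a:ℕ) then 1 else 0 := by simp [Fin.ext_iff]
  have hN : ∀ (j b : Fin n), (Vᵀ * Zstar) j b = if (j:ℕ) < r then V b j else 0 := by
    intro j b
    show (Vᵀ * (V₁ * V₁ᵀ)) j b = _
    rw [← Matrix.mul_assoc, Matrix.mul_apply]
    by_cases hjr : (j:ℕ) < r
    · rw [if_pos hjr, Finset.sum_eq_single (⟨(j:ℕ), hjr⟩ : Fin r)]
      · rw [hVtV1]
        rw [if_pos rfl, one_mul]
        show V b (Fin.castLE hrn ⟨(j:ℕ), hjr⟩) = V b j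
        rfl
      · intro a _ ha
        rw [hVtV1, if_neg (fun h => ha (Fin.ext h.symm)), zero_mul]
      · intro h; exact absurd (Finset.mem_univ _) h
    · rw [if_neg hjr]
      apply Finset.sum_eq_zero
      intro a _
      rw [hVtV1, if_neg (fun h => hjr (by rw [h]; exact a.isLt)), zero_mul]
  have hSrN : Sr * (Vᵀ * Zstar) = Sr * Vᵀ := by
    ext i b
    rw [Matrix.mul_apply, Matrix.mul_apply]
    apply Finset.sum_congr rfl
    intro j _
    by_cases hc : (i:ℕ) = (j:ℕ) ∧ (i:ℕ) < r
    · rw [hN j b, if_pos (show (j:ℕ) < r by rw [← hc.1]; exact hc.2), Matrix.transpose_apply]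
    · rw [hSrdef, truncS_apply_ne m n σ r i j hc, zero_mul, zero_mul]
  constructor
  · show Astar = Astar * Zstar
    conv_rhs => rw [show Astar = U * Sr * Vᵀ from rfl, Matrix.mul_assoc, Matrix.mul_assoc,
      hSrN, ← Matrix.mul_assoc]
  · intro A Z hAZ
    obtain ⟨P, k, hPt, hPP, hAP, hPZ, htrP⟩ := exists_proj A Z hAZ
    have hXtX : Xᵀ * X = V * Matrix.diagonal (fun j : Fin n => Dfun m n σ (j:ℕ)) * Vᵀ := by
      have hXT : Xᵀ = V * Sᵀ * Uᵀ := by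
        rw [hX]
        simp only [Matrix.transpose_mul, Matrix.transpose_transpose]
        rw [← Matrix.mul_assoc]
      rw [hXT, hX]
      rw [show V * Sᵀ * Uᵀ * (U * S * Vᵀ) = V * (Sᵀ * (Uᵀ * U) * (S * Vᵀ)) from by
        simp only [Matrix.mul_assoc]]
      rw [hU, Matrix.mul_one, ← Matrix.mul_assoc Sᵀ, hSdef, truncS_tmul, ← Matrix.mul_assoc]
    have h1 : (k:ℝ) ≤ nuclearNorm Z := htrP ▸ trace_le_nuclear Z P hPt hPP hPZ
    have h2 : tailSum m n σ k ≤ frobSq (X - A) :=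
      frob_tail_le X A V σ hV hσ0 hσ hXtX P hPt hPP hAP k htrP
    have h3 := hr k
    rw [hnucZ, hfrobA]
    have h4 : lam * tailSum m n σ k ≤ lam * frobSq (X - A) :=
      mul_le_mul_of_nonneg_left h2 hlam.le
    linarith
end
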